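/- (One-step contraction for regularized SVRG argument) Let f be σ-strongly convex and L-smooth with minimizer x* and optimal value f*. For μ ≥ 0 and fixed x̃, define f^t(x) = f(x) + (μ/2)‖x - x̃‖², with minimum value f^{t*}. Then f(x̃) - f^{t*} ≥ (σ/(L+μ))·(f(x̃) - f*) and f(x̃) - f^{t*} ≥ (1 - μ/σ)·(f(x̃) - f*). -/

import Mathlib

open InnerProductSpace


open scoped RealInnerProductSpace

variable {E : Type*} [NormedAddCommGroup E] [InnerProductSpace ℝ E] [CompleteSpace E]

/-- derivative of `t ↦ f (x + t • v)` -/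
lemma hasDerivAt_comp_line {f : E → ℝ} (hdiff : Differentiable ℝ f) (x v : E) (t : ℝ) :
    HasDerivAt (fun s : ℝ => f (x + s • v)) ⟪gradient f (x + t • v), v⟫ t := by
  have hc : HasDerivAt (fun s : ℝ => x + s • v) v t := by
    simpa using ((hasDerivAt_id t).smul_const v).const_add x
  have hf := ((hdiff (x + t • v)).hasGradientAt).hasFDerivAt
  have := hf.comp_hasDerivAt t hc
  simpa [InnerProductSpace.toDual_apply_apply, Function.comp_def] using this

/-- first-order strong convexity inequality -/
lemma strong_convex_grad_ineq {f : E → ℝ} {σ : ℝ}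
    (hsc : StrongConvexOn Set.univ σ f) (hdiff : Differentiable ℝ f) (x y : E) :
    f x + ⟪gradient f x, y - x⟫ + σ / 2 * ‖y - x‖ ^ 2 ≤ f y := by
  set v := y - x with hv
  have hder : HasDerivAt (fun s : ℝ => f (x + s • v)) ⟪gradient f x, v⟫ 0 := by
    simpa using hasDerivAt_comp_line hdiff x v 0
  -- slope bound from strong convexity
  have key : ∀ t : ℝ, 0 < t → t < 1 →
      (f (x + t • v) - f x) / t ≤ f y - f x - (1 - t) * (σ / 2 * ‖v‖ ^ 2) := by
    intro t ht ht1
    have h2 := hsc.2 (Set.mem_univ x) (Set.mem_univ y)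
      (show (0:ℝ) ≤ 1 - t by linarith) ht.le (show (1 - t) + t = 1 by ring)
    have hxy : (1 - t) • x + t • y = x + t • v := by rw [hv]; module
    have hnv : ‖x - y‖ = ‖v‖ := by rw [hv, ← norm_neg]; congr 1; abel
    rw [hxy, hnv] at h2
    rw [div_le_iff₀ ht]
    simp only [smul_eq_mul] at h2
    nlinarith [h2]
  -- take the limit t → 0+
  have hlim : Filter.Tendsto (fun t : ℝ => (f (x + t • v) - f x) / t)
      (nhdsWithin 0 (Set.Ioi 0)) (nhds ⟪gradient f x, v⟫) := by
    have h1 := hasDerivAt_iff_tendsto_slope.mp hder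
    have h2 := h1.mono_left (nhdsWithin_mono _ (fun t ht => ne_of_gt ht))
    refine h2.congr fun t => ?_
    simp [slope_def_field]
  have hrhs : Filter.Tendsto (fun t : ℝ => f y - f x - (1 - t) * (σ / 2 * ‖v‖ ^ 2))
      (nhdsWithin 0 (Set.Ioi 0)) (nhds (f y - f x - σ / 2 * ‖v‖ ^ 2)) := by
    have : Continuous fun t : ℝ => f y - f x - (1 - t) * (σ / 2 * ‖v‖ ^ 2) := by
      continuity
    have h := (this.tendsto 0).mono_left (nhdsWithin_le_nhds (s := Set.Ioi (0:ℝ)))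
    simpa using h
  have hle : ⟪gradient f x, v⟫ ≤ f y - f x - σ / 2 * ‖v‖ ^ 2 := by
    refine le_of_tendsto_of_tendsto hlim hrhs ?_
    filter_upwards [self_mem_nhdsWithin,
      nhdsWithin_le_nhds (Iio_mem_nhds one_pos)] with t ht ht1
    exact key t ht ht1
  linarith

/-- descent lemma -/
lemma descent_lemma {f : E → ℝ} {L : ℝ} (hL : 0 ≤ L)
    (hdiff : Differentiable ℝ f) (hlip : LipschitzWith L.toNNReal (gradient f)) (x y : E) :
    f y ≤ f x + ⟪gradient f x, y - x⟫ + L / 2 * ‖y - x‖ ^ 2 := by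
  set v := y - x with hv
  have hcont : Continuous fun t : ℝ => ⟪gradient f (x + t • v), v⟫ := by
    refine Continuous.inner ?_ continuous_const
    exact hlip.continuous.comp (by continuity)
  have hftc : f (x + (1:ℝ) • v) - f (x + (0:ℝ) • v)
      = ∫ t in (0:ℝ)..1, ⟪gradient f (x + t • v), v⟫ := by
    rw [intervalIntegral.integral_eq_sub_of_hasDerivAt
      (fun t _ => hasDerivAt_comp_line hdiff x v t) (hcont.intervalIntegrable 0 1)]
  have hbound : ∀ t ∈ Set.Icc (0:ℝ) 1,
      ⟪gradient f (x + t • v), v⟫ ≤ ⟪gradient f x, v⟫ + L * ‖v‖ ^ 2 * t := by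
    intro t ht
    have h1 : ⟪gradient f (x + t • v) - gradient f x, v⟫
        ≤ ‖gradient f (x + t • v) - gradient f x‖ * ‖v‖ :=
      real_inner_le_norm _ _
    have h2 : ‖gradient f (x + t • v) - gradient f x‖ ≤ L * (t * ‖v‖) := by
      have := hlip.dist_le_mul (x + t • v) x
      rw [dist_eq_norm, dist_eq_norm, Real.coe_toNNReal L hL] at this
      calc ‖gradient f (x + t • v) - gradient f x‖ ≤ L * ‖x + t • v - x‖ := this
        _ = L * (t * ‖v‖) := by
            rw [add_sub_cancel_left, norm_smul, Real.norm_eq_abs, abs_of_nonneg ht.1]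
    have h3 : ⟪gradient f (x + t • v), v⟫ - ⟪gradient f x, v⟫
        ≤ L * (t * ‖v‖) * ‖v‖ := by
      rw [← inner_sub_left]
      exact h1.trans (by nlinarith [norm_nonneg v])
    nlinarith
  have hint : f y - f x ≤ ⟪gradient f x, v⟫ + L / 2 * ‖v‖ ^ 2 := by
    have h4 : (∫ t in (0:ℝ)..1, ⟪gradient f (x + t • v), v⟫)
        ≤ ∫ t in (0:ℝ)..1, (⟪gradient f x, v⟫ + L * ‖v‖ ^ 2 * t) := by
      refine intervalIntegral.integral_mono_on zero_le_one
        (hcont.intervalIntegrable 0 1) (Continuous.intervalIntegrable (by continuity) 0 1)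
        hbound
    have h5 : (∫ t in (0:ℝ)..1, (⟪gradient f x, v⟫ + L * ‖v‖ ^ 2 * t))
        = ⟪gradient f x, v⟫ + L / 2 * ‖v‖ ^ 2 := by
      rw [intervalIntegral.integral_add (intervalIntegrable_const)
        (Continuous.intervalIntegrable (by continuity) 0 1),
        intervalIntegral.integral_const_mul, integral_id]
      simp; ring
    have hy1 : x + (1:ℝ) • v = y := by rw [hv]; module
    have hy0 : x + (0:ℝ) • v = x := by module
    rw [hy1, hy0] at hftc
    rw [hftc]
    exact h4.trans_eq h5
  linarith

/-- lower bounds on `f(x̃) - f^{t*}` for the regularized function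
`f^t(x) = f(x) + (μ/2)‖x - x̃‖²`. -/
theorem statement15 {d : ℕ} (f : EuclideanSpace ℝ (Fin d) → ℝ) (σ L μ : ℝ)
    (hσ : 0 < σ) (hσL : σ ≤ L) (hμ : 0 ≤ μ)
    (hdiff : Differentiable ℝ f)
    (hsc : StrongConvexOn Set.univ σ f)
    (hlip : LipschitzWith L.toNNReal (gradient f))
    (xstar : EuclideanSpace ℝ (Fin d)) (hmin : IsMinOn f Set.univ xstar)
    (xt : EuclideanSpace ℝ (Fin d))
    (xtstar : EuclideanSpace ℝ (Fin d))
    (hmint : IsMinOn (fun x => f x + μ / 2 * ‖x - xt‖ ^ 2) Set.univ xtstar) :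
    σ / (L + μ) * (f xt - f xstar) ≤
        f xt - (f xtstar + μ / 2 * ‖xtstar - xt‖ ^ 2) ∧
      (1 - μ / σ) * (f xt - f xstar) ≤
        f xt - (f xtstar + μ / 2 * ‖xtstar - xt‖ ^ 2) := by
  have hL0 : (0:ℝ) ≤ L := hσ.le.trans hσL
  have hLμ : (0:ℝ) < L + μ := by linarith
  set g := gradient f xt with hg
  -- gradient vanishes at the minimizer
  have hgrad0 : gradient f xstar = 0 := by
    have hloc : IsLocalMin f xstar := hmin.isLocalMin Filter.univ_mem
    rw [gradient, hloc.fderiv_eq_zero, map_zero]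
  -- quadratic growth at the minimizer
  have hqg : f xstar + σ / 2 * ‖xt - xstar‖ ^ 2 ≤ f xt := by
    have h := strong_convex_grad_ineq hsc hdiff xstar xt
    rw [hgrad0, inner_zero_left] at h
    linarith
  -- Polyak–Łojasiewicz inequality
  have hPL : 2 * σ * (f xt - f xstar) ≤ ‖g‖ ^ 2 := by
    have h1 := strong_convex_grad_ineq hsc hdiff xt xstar
    have h2 : -(‖g‖ * ‖xstar - xt‖) ≤ ⟪g, xstar - xt⟫ := by
      have ha := abs_real_inner_le_norm g (xstar - xt)
      have hb := neg_abs_le (⟪g, xstar - xt⟫ : ℝ)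
      linarith
    nlinarith [sq_nonneg (σ * ‖xstar - xt‖ - ‖g‖), norm_nonneg (xstar - xt)]
  -- first bound via descent lemma at y = xt - (L+μ)⁻¹ • g
  set y := xt - (L + μ)⁻¹ • g with hy
  have hys : y - xt = -((L + μ)⁻¹ • g) := by rw [hy]; abel
  have hdl := descent_lemma hL0 hdiff hlip xt y
  rw [hys, inner_neg_right, real_inner_smul_right, real_inner_self_eq_norm_sq,
    norm_neg, norm_smul] at hdl
  have habs : ‖(L + μ)⁻¹‖ = (L + μ)⁻¹ := by
    rw [Real.norm_eq_abs, abs_of_pos (inv_pos.mpr hLμ)]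
  rw [habs] at hdl
  have hmin1 := isMinOn_iff.mp hmint y (Set.mem_univ y)
  rw [hys, norm_neg, norm_smul, habs] at hmin1
  rw [← hg] at hdl
  have e2 : L / 2 * ((L + μ)⁻¹ * ‖g‖) ^ 2 + μ / 2 * ((L + μ)⁻¹ * ‖g‖) ^ 2
      = (L + μ)⁻¹ * ‖g‖ ^ 2 / 2 := by
    field_simp
  have h7 : f xtstar + μ / 2 * ‖xtstar - xt‖ ^ 2 ≤ f xt - (L + μ)⁻¹ * ‖g‖ ^ 2 / 2 := by
    linarith
  have hsub : (L + μ)⁻¹ * ‖g‖ ^ 2 / 2 ≤ f xt - (f xtstar + μ / 2 * ‖xtstar - xt‖ ^ 2) := by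
    linarith
  have h8 := mul_le_mul_of_nonneg_right hsub (by linarith : (0:ℝ) ≤ 2 * (L + μ))
  have e4 : (L + μ)⁻¹ * ‖g‖ ^ 2 / 2 * (2 * (L + μ)) = ‖g‖ ^ 2 := by
    field_simp
  rw [e4] at h8
  constructor
  · rw [div_mul_eq_mul_div, div_le_iff₀ hLμ]
    nlinarith [h8, hPL]
  · -- second bound
    have hmin2 := isMinOn_iff.mp hmint xstar (Set.mem_univ xstar)
    have hb : μ / 2 * ‖xstar - xt‖ ^ 2 ≤ μ / σ * (f xt - f xstar) := by
      rw [norm_sub_rev]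
      have e1 : μ / 2 * ‖xt - xstar‖ ^ 2 = μ / σ * (σ / 2 * ‖xt - xstar‖ ^ 2) := by
        field_simp
      rw [e1]
      exact mul_le_mul_of_nonneg_left (by linarith) (div_nonneg hμ hσ.le)
    have expand : (1 - μ / σ) * (f xt - f xstar)
        = (f xt - f xstar) - μ / σ * (f xt - f xstar) := by ring
    rw [expand]
    linarith [hmin2, hb]
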